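/- Let ζ₇ = exp(2πi/7) ∈ ℂ, ξ = ζ₇ + ζ₇⁻¹, and let L₂ be the smallest subfield of ℂ containing i√5 and ξ (that is, L₂ = ℚ(√−5, ξ)). Then (3/2)(ξ² − 1) is not a square in L₂: there is no w ∈ L₂ with w² = (3/2)(ξ² − 1). -/

import Mathlib

open Complex Polynomial

-- helper: z + z⁻¹ cubic relation for 7th roots of unity
private lemma key7 (z : ℂ) (h7 : z ^ 7 = 1)
    (hs : z^6 + z^5 + z^4 + z^3 + z^2 + z + 1 = 0) :
    (z + z⁻¹) ^ 3 + (z + z⁻¹) ^ 2 - 2 * (z + z⁻¹) - 1 = 0 := by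
  have hinv : z⁻¹ = z ^ 6 := inv_eq_of_mul_eq_one_right (by linear_combination h7)
  rw [hinv]
  linear_combination hs + (z^11 + 3*z^6 + z^5 + z^4 + 3*z + 2) * h7

private lemma exp_add_inv (θ : ℝ) :
    Complex.exp (θ * I) + (Complex.exp (θ * I))⁻¹ = ((2 * Real.cos θ : ℝ) : ℂ) := by
  rw [← Complex.exp_neg, ← neg_mul, Complex.exp_mul_I, Complex.exp_mul_I]
  push_cast
  rw [Complex.cos_neg, Complex.sin_neg, ← Complex.ofReal_cos]
  ring

-- irreducibility of X^3 + X^2 - 2X - 1 over ℚ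
private lemma cubic_irred : Irreducible (X ^ 3 + X ^ 2 - 2 * X - 1 : ℚ[X]) := by
  have hmonicZ : (X ^ 3 + X ^ 2 - 2 * X - 1 : ℤ[X]).Monic := by monicity!
  have hmap2 : (X ^ 3 + X ^ 2 - 2 * X - 1 : ℤ[X]).map (Int.castRingHom (ZMod 2))
      = X ^ 3 + X ^ 2 + 1 := by
    simp only [Polynomial.map_add, Polynomial.map_sub, Polynomial.map_pow, Polynomial.map_mul,
      Polynomial.map_X, Polynomial.map_one, Polynomial.map_ofNat]
    ring_nf
    rw [CharTwo.neg_eq, ← map_ofNat Polynomial.C 2, show (2 : ZMod 2) = 0 from rfl, map_zero]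
    ring
  have hirr2 : Irreducible ((X ^ 3 + X ^ 2 - 2 * X - 1 : ℤ[X]).map (Int.castRingHom (ZMod 2))) := by
    rw [hmap2]
    have hm : (X ^ 3 + X ^ 2 + 1 : (ZMod 2)[X]).Monic := by monicity!
    have hd : (X ^ 3 + X ^ 2 + 1 : (ZMod 2)[X]).natDegree = 3 := by compute_degree!
    rw [Polynomial.irreducible_iff_roots_eq_zero_of_degree_le_three (by omega) (by omega)]
    rw [Multiset.eq_zero_iff_forall_notMem]
    intro a ha
    rw [mem_roots hm.ne_zero] at ha
    simp only [IsRoot, eval_add, eval_pow, eval_X, eval_one] at ha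
    revert ha
    revert a
    decide
  have hirrZ : Irreducible (X ^ 3 + X ^ 2 - 2 * X - 1 : ℤ[X]) :=
    hmonicZ.irreducible_of_irreducible_map _ _ hirr2
  have := (Polynomial.IsPrimitive.Int.irreducible_iff_irreducible_map_cast
    hmonicZ.isPrimitive).mp hirrZ
  convert this using 1
  simp only [Polynomial.map_add, Polynomial.map_sub, Polynomial.map_pow, Polynomial.map_mul,
    Polynomial.map_X, Polynomial.map_one, Polynomial.map_ofNat]

set_option maxHeartbeats 1000000 in
/-- Example 3 of the paper (anisotropy for `C₂`): with `ξ = ζ₇ + ζ₇⁻¹` and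
`L₂ = ℚ(√−5, ξ) ⊂ ℂ`, the element `(3/2)(ξ² − 1)` is not a square in `L₂`. -/
theorem xi7_quadratic_not_square
    (ζ : ℂ) (hζ : ζ = Complex.exp (2 * Real.pi * Complex.I / 7))
    (ξ : ℂ) (hξ : ξ = ζ + ζ⁻¹)
    (L₂ : IntermediateField ℚ ℂ)
    (hL : L₂ = IntermediateField.adjoin ℚ {Complex.I * Real.sqrt 5, ξ}) :
    ∀ w : ℂ, w ∈ L₂ → w ^ 2 ≠ (3 / 2) * (ξ ^ 2 - 1) := by
  subst hL
  intro w hw hweq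
  have pi_pos := Real.pi_pos
  -- basic facts about ζ
  have hζ7 : ζ ^ 7 = 1 := by
    rw [hζ, ← Complex.exp_nat_mul]
    rw [show (7 : ℕ) * (2 * ↑Real.pi * I / 7) = 2 * ↑Real.pi * I by push_cast; ring]
    exact Complex.exp_two_pi_mul_I
  have hζ1 : ζ ≠ 1 := by
    rw [hζ]
    intro h
    rw [Complex.exp_eq_one_iff] at h
    obtain ⟨n, hn⟩ := h
    have hπI : (2 * (Real.pi : ℂ) * I) ≠ 0 := by
      simp [Real.pi_ne_zero, Complex.I_ne_zero]
    have h2 : (1 : ℂ) * (2 * ↑Real.pi * I) = ((7 * n : ℤ) : ℂ) * (2 * ↑Real.pi * I) := by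
      push_cast
      linear_combination 7 * hn
    have h3 := mul_right_cancel₀ hπI h2
    norm_cast at h3
    omega
  -- sum of 7th roots
  have hsum : ζ^6 + ζ^5 + ζ^4 + ζ^3 + ζ^2 + ζ + 1 = 0 := by
    have hfac : (ζ - 1) * (ζ^6 + ζ^5 + ζ^4 + ζ^3 + ζ^2 + ζ + 1) = 0 := by
      linear_combination hζ7
    rcases mul_eq_zero.mp hfac with h | h
    · exact absurd (sub_eq_zero.mp h) hζ1
    · exact h
  -- the cubic relations
  have hcube : ξ ^ 3 + ξ ^ 2 - 2 * ξ - 1 = 0 := by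
    rw [hξ]; exact key7 ζ hζ7 hsum
  set ξ₂ : ℂ := ζ ^ 2 + (ζ ^ 2)⁻¹ with hξ₂
  have hcube₂ : ξ₂ ^ 3 + ξ₂ ^ 2 - 2 * ξ₂ - 1 = 0 := by
    refine key7 (ζ ^ 2) (by linear_combination (ζ^7 + 1) * hζ7) ?_
    linear_combination hsum + (ζ^5 + ζ^3 + ζ) * hζ7
  -- real expressions
  have hξR : ξ = ((2 * Real.cos (2 * Real.pi / 7) : ℝ) : ℂ) := by
    rw [hξ, hζ, show 2 * (Real.pi : ℂ) * I / 7 = ((2 * Real.pi / 7 : ℝ) : ℂ) * I by push_cast; ring]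
    exact exp_add_inv _
  have hξ₂R : ξ₂ = ((2 * Real.cos (4 * Real.pi / 7) : ℝ) : ℂ) := by
    rw [hξ₂, hζ, ← Complex.exp_nat_mul,
      show (2 : ℕ) * (2 * (Real.pi : ℂ) * I / 7) = ((4 * Real.pi / 7 : ℝ) : ℂ) * I by
        push_cast; ring]
    exact exp_add_inv _
  -- cosine bounds
  have hcos1 : 1 / 2 < Real.cos (2 * Real.pi / 7) := by
    have := Real.cos_lt_cos_of_nonneg_of_le_pi (x := 2 * Real.pi / 7) (y := Real.pi / 3)
      (by positivity) (by linarith) (by linarith)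
    rwa [Real.cos_pi_div_three] at this
  have hcos2a : Real.cos (4 * Real.pi / 7) < 1 / 2 := by
    have := Real.cos_lt_cos_of_nonneg_of_le_pi (x := Real.pi / 3) (y := 4 * Real.pi / 7)
      (by positivity) (by linarith) (by linarith)
    rwa [Real.cos_pi_div_three] at this
  have hcos2b : -(1 / 2) < Real.cos (4 * Real.pi / 7) := by
    have := Real.cos_lt_cos_of_nonneg_of_le_pi (x := 4 * Real.pi / 7) (y := 2 * Real.pi / 3)
      (by positivity) (by linarith) (by linarith)
    rw [show 2 * Real.pi / 3 = Real.pi - Real.pi / 3 by ring, Real.cos_pi_sub,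
      Real.cos_pi_div_three] at this
    linarith
  -- minimal polynomial of ξ
  have hminp : minpoly ℚ ξ = (X ^ 3 + X ^ 2 - 2 * X - 1 : ℚ[X]) := by
    refine (minpoly.eq_of_irreducible_of_monic cubic_irred ?_ (by monicity!)).symm
    simp only [map_add, map_sub, map_pow, map_mul, aeval_X, map_one, map_ofNat]
    linear_combination hcube
  have haevalξ₂ : (aeval ξ₂) (minpoly ℚ ξ) = 0 := by
    rw [hminp]
    simp only [map_add, map_sub, map_pow, map_mul, aeval_X, map_one, map_ofNat]
    linear_combination hcube₂
  -- integrality of the generators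
  have hsq5 : ((Real.sqrt 5 : ℂ)) ^ 2 = 5 := by
    rw [← Complex.ofReal_pow, Real.sq_sqrt (by norm_num : (5:ℝ) ≥ 0)]
    norm_num
  have hint5 : IsIntegral ℚ (Complex.I * Real.sqrt 5) := by
    refine ⟨X ^ 2 + C 5, by monicity!, ?_⟩
    simp only [eval₂_add, eval₂_pow, eval₂_X, eval₂_C]
    rw [mul_pow, Complex.I_sq]
    rw [hsq5]
    norm_num
  have hintξ : IsIntegral ℚ ξ := by
    refine ⟨X ^ 3 + X ^ 2 - 2 * X - 1, by monicity!, ?_⟩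
    simp only [eval₂_add, eval₂_sub, eval₂_pow, eval₂_mul, eval₂_X, eval₂_one, eval₂_ofNat]
    linear_combination hcube
  have hK : ∀ s ∈ ({Complex.I * Real.sqrt 5, ξ} : Set ℂ),
      IsIntegral ℚ s ∧ ((minpoly ℚ s).map (algebraMap ℚ ℂ)).Splits := by
    rintro s (rfl | rfl)
    · exact ⟨hint5, IsAlgClosed.splits _⟩
    · exact ⟨hintξ, IsAlgClosed.splits _⟩
  have hξmem : ξ ∈ IntermediateField.adjoin ℚ ({Complex.I * Real.sqrt 5, ξ} : Set ℂ) :=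
    IntermediateField.subset_adjoin _ _ (by simp)
  set Lf := IntermediateField.adjoin ℚ ({Complex.I * Real.sqrt 5, ξ} : Set ℂ) with hLf
  obtain ⟨φ, hφξ⟩ := IntermediateField.exists_algHom_adjoin_of_splits_of_aeval
    (K := ℂ) hK hξmem haevalξ₂
  -- conjugation maps Lf to itself
  have hconjmem : ∀ x ∈ Lf, (starRingEnd ℂ) x ∈ Lf := by
    intro x hx
    refine IntermediateField.adjoin_induction ℚ
      (p := fun y _ => (starRingEnd ℂ) y ∈ Lf) ?_ ?_ ?_ ?_ ?_ hx
    · rintro z (rfl | hz)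
      · rw [map_mul, Complex.conj_I, Complex.conj_ofReal, neg_mul]
        exact neg_mem (IntermediateField.subset_adjoin _ _ (by simp))
      · rw [hz]
        have hcξ : (starRingEnd ℂ) ξ = ξ := by rw [hξR]; exact Complex.conj_ofReal _
        rw [hcξ]
        exact IntermediateField.subset_adjoin _ _ (by simp)
    · intro q
      have : (starRingEnd ℂ) (algebraMap ℚ ℂ q) = algebraMap ℚ ℂ q := by
        rw [eq_ratCast (algebraMap ℚ ℂ) q]
        exact map_ratCast _ q
      rw [this]; exact IntermediateField.algebraMap_mem _ _
    · intro a b _ _ ha hb; rw [map_add]; exact add_mem ha hb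
    · intro a _ ha; rw [map_inv₀]; exact inv_mem ha
    · intro a b _ _ ha hb; rw [map_mul]; exact mul_mem ha hb
  -- conjugation as a ℚ-algebra endomorphism of Lf
  let τ : Lf →ₐ[ℚ] Lf :=
    { toFun := fun x => ⟨(starRingEnd ℂ) x, hconjmem x x.2⟩
      map_one' := Subtype.ext (by simp)
      map_mul' := fun x y => Subtype.ext (by push_cast; simp)
      map_zero' := Subtype.ext (by simp)
      map_add' := fun x y => Subtype.ext (by push_cast; simp)
      commutes' := fun q => Subtype.ext (by
        simp only [IntermediateField.algebraMap_apply]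
        rw [eq_ratCast (algebraMap ℚ Lf) q]
        push_cast
        exact map_ratCast _ q) }
  -- conjugation on ℂ as a ℚ-algebra map
  let J : ℂ →ₐ[ℚ] ℂ :=
    { toRingHom := starRingEnd ℂ
      commutes' := fun q => by
        rw [eq_ratCast (algebraMap ℚ ℂ) q]
        exact map_ratCast (starRingEnd ℂ) q }
  -- J ∘ φ = φ ∘ τ
  have hEq : J.comp φ = φ.comp τ := by
    refine IntermediateField.algHom_ext_of_eq_adjoin ℚ hLf ?_
    intro x hxmem
    rcases hxmem with hz | hz
    all_goals rw [show (⟨x, _⟩ : Lf) = ⟨x, hLf.ge (IntermediateField.subset_adjoin _ _ (by simp [hz]))⟩ from rfl]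
    · -- x = I * √5
      rw [show (⟨x, _⟩ : Lf) =
        ⟨Complex.I * Real.sqrt 5, hLf.ge (IntermediateField.subset_adjoin _ _ (by simp))⟩
        from Subtype.ext hz]
      set ihat : Lf := ⟨Complex.I * Real.sqrt 5,
        hLf ▸ IntermediateField.subset_adjoin _ _ (by simp)⟩ with hihat
      set v : ℂ := φ ihat with hv
      have hisq : ihat ^ 2 = (-5 : Lf) := by
        refine Subtype.ext ?_
        push_cast
        rw [mul_pow, Complex.I_sq, hsq5]
        norm_num
        norm_cast
      have hv2 : v ^ 2 = -5 := by
        rw [hv, ← map_pow, hisq, map_neg, map_ofNat]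
      have hvconj : (starRingEnd ℂ) v = -v := by
        have h1 : ((starRingEnd ℂ) v - v) * ((starRingEnd ℂ) v + v) = 0 := by
          have : ((starRingEnd ℂ) v) ^ 2 = v ^ 2 := by
            rw [← map_pow, hv2, map_neg, map_ofNat]
          linear_combination this
        rcases mul_eq_zero.mp h1 with h | h
        · exfalso
          have hvim : v.im = 0 := Complex.conj_eq_iff_im.mp (sub_eq_zero.mp h)
          have := congrArg Complex.re hv2
          rw [pow_two, Complex.mul_re, hvim] at this
          norm_num at this
          nlinarith
        · linear_combination h
      have hτihat : τ ihat = -ihat := by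
        refine Subtype.ext ?_
        show (starRingEnd ℂ) (Complex.I * Real.sqrt 5) = ((-ihat : Lf) : ℂ)
        push_cast
        rw [map_mul, Complex.conj_I, Complex.conj_ofReal]
        ring
      show (starRingEnd ℂ) (φ ihat) = φ (τ ihat)
      rw [hτihat, map_neg, ← hv, hvconj]
    · -- x = ξ
      rw [show (⟨x, _⟩ : Lf) = ⟨ξ, hξmem⟩ from Subtype.ext hz]
      set xhat : Lf := ⟨ξ, hξmem⟩ with hxhat
      have hτξ : τ xhat = xhat := by
        refine Subtype.ext ?_
        show (starRingEnd ℂ) ξ = ξ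
        rw [hξR, Complex.conj_ofReal]
      show (starRingEnd ℂ) (φ xhat) = φ (τ xhat)
      rw [hτξ, hφξ, hξ₂R, Complex.conj_ofReal]
  -- w is real
  set t₁ : ℝ := 2 * Real.cos (2 * Real.pi / 7) with ht₁
  have hc : w ^ 2 = ((3 / 2 * (t₁ ^ 2 - 1) : ℝ) : ℂ) := by
    rw [hweq, hξR]
    push_cast
    ring
  have ht₁gt : 1 < t₁ := by rw [ht₁]; linarith
  have him := congrArg Complex.im hc
  have hre := congrArg Complex.re hc
  rw [pow_two, Complex.mul_im, Complex.ofReal_im] at him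
  rw [pow_two, Complex.mul_re, Complex.ofReal_re] at hre
  have hwim : w.im = 0 := by
    have hprod : w.re * w.im = 0 := by linarith [him]
    rcases mul_eq_zero.mp hprod with h | h
    · exfalso
      rw [h] at hre
      nlinarith [sq_nonneg w.im, mul_pos (by linarith : (0:ℝ) < t₁ - 1) (by linarith : (0:ℝ) < t₁ + 1)]
    · exact h
  set what : Lf := ⟨w, hw⟩ with hwhat
  have hτw : τ what = what := Subtype.ext (by
    show (starRingEnd ℂ) w = w
    rw [Complex.conj_eq_iff_im]
    exact hwim)
  have hufix : (starRingEnd ℂ) (φ what) = φ what := by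
    have h := congrArg (fun f : _ →ₐ[ℚ] ℂ => f what) hEq
    simp only [AlgHom.comp_apply] at h
    exact h.trans (congrArg φ hτw)
  have huim : (φ what).im = 0 := Complex.conj_eq_iff_im.mp hufix
  -- the square identity
  have hsq : 2 * (φ what) ^ 2 = 3 * (ξ₂ ^ 2 - 1) := by
    have hwsq : (2 : Lf) * what ^ 2 = 3 * ((⟨ξ, hξmem⟩ : Lf) ^ 2 - 1) := by
      refine Subtype.ext ?_
      have h2 : ((2 : Lf) : ℂ) = 2 := rfl
      have h3 : ((3 : Lf) : ℂ) = 3 := rfl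
      push_cast [h2, h3]
      linear_combination 2 * hweq
    calc 2 * (φ what) ^ 2 = φ ((2 : Lf) * what ^ 2) := by
          rw [map_mul, map_pow, map_ofNat]
      _ = φ (3 * ((⟨ξ, hξmem⟩ : Lf) ^ 2 - 1)) := by rw [hwsq]
      _ = 3 * (ξ₂ ^ 2 - 1) := by rw [map_mul, map_sub, map_pow, map_ofNat, map_one, hφξ]
  set t₂ : ℝ := 2 * Real.cos (4 * Real.pi / 7) with ht₂
  have hsq' : 2 * (φ what) ^ 2 = ((3 * (t₂ ^ 2 - 1) : ℝ) : ℂ) := by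
    rw [hsq, hξ₂R]
    push_cast
    ring
  have hneg : 3 * (t₂ ^ 2 - 1) < 0 := by
    have h1 : -1 < t₂ := by rw [ht₂]; linarith
    have h2 : t₂ < 1 := by rw [ht₂]; linarith
    nlinarith
  have hre2 := congrArg Complex.re hsq'
  rw [Complex.ofReal_re] at hre2
  have hlhs : (2 * (φ what) ^ 2).re = 2 * ((φ what).re ^ 2) := by
    rw [pow_two, Complex.mul_re, Complex.mul_re, huim]
    norm_num
    ring
  rw [hlhs] at hre2
  nlinarith [sq_nonneg (φ what).re]
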